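/- Let $b_n = \lambda\cos(n^\gamma)$ for fixed $\lambda > 0$ and $\gamma \in (0, 1/2)$. Then $\sum_{n=1}^\infty |b_{n+1} - b_n|^2 < \infty$, $\limsup_{n\to\infty} b_n = \lambda$, and $\liminf_{n\to\infty} b_n = -\lambda$. -/

import Mathlib

open Filter

/-- MVT bound for the increment of `x ↦ x^γ`. -/
lemma rpow_step_bound (γ : ℝ) (hγ0 : 0 < γ) (hγle : γ ≤ 1) (n : ℕ) (hn : 1 ≤ n) :
    ((n : ℝ) + 1) ^ γ - (n : ℝ) ^ γ ≤ γ * (n : ℝ) ^ (γ - 1) := by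
  have hn1 : (1 : ℝ) ≤ (n : ℝ) := by exact_mod_cast hn
  have hnpos : (0 : ℝ) < n := lt_of_lt_of_le zero_lt_one hn1
  have key := norm_image_sub_le_of_norm_deriv_le_segment'
    (f := fun x : ℝ => x ^ γ) (f' := fun x : ℝ => γ * x ^ (γ - 1))
    (a := (n : ℝ)) (b := (n : ℝ) + 1)
    (fun x hx => by
      have hx0 : x ≠ 0 := by
        have : (0:ℝ) < x := lt_of_lt_of_le hnpos hx.1
        exact ne_of_gt this
      exact (Real.hasDerivAt_rpow_const (Or.inl hx0)).hasDerivWithinAt)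
    (C := γ * (n : ℝ) ^ (γ - 1))
    (fun x hx => by
      have hx0 : (0:ℝ) < x := lt_of_lt_of_le hnpos hx.1
      have hb : x ^ (γ - 1) ≤ (n : ℝ) ^ (γ - 1) :=
        Real.rpow_le_rpow_of_nonpos hnpos hx.1 (by linarith)
      have h1 : (0:ℝ) ≤ x ^ (γ - 1) := (Real.rpow_pos_of_pos hx0 _).le
      have h2 : (0:ℝ) ≤ γ * x ^ (γ - 1) := mul_nonneg hγ0.le h1
      rw [Real.norm_eq_abs, abs_of_nonneg h2]
      exact mul_le_mul_of_nonneg_left hb hγ0.le)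
    ((n : ℝ) + 1) ⟨by linarith, le_refl _⟩
  rw [Real.norm_eq_abs] at key
  have h2 := (le_abs_self (((n:ℝ)+1) ^ γ - (n:ℝ) ^ γ)).trans key
  have h3 : (n:ℝ) + 1 - (n:ℝ) = 1 := by ring
  rw [h3, mul_one] at h2
  exact h2

/-- Density lemma: a strictly increasing sequence tending to infinity with steps
tending to zero comes `δ`-close to some point of `t + 2πℕ` beyond any index. -/
lemma comes_close (γ : ℝ) (hγ0 : 0 < γ) (hγ1 : γ < 1) (t : ℝ) (ht : 0 ≤ t)
    (δ : ℝ) (hδ : 0 < δ) (N : ℕ) :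
    ∃ n : ℕ, N ≤ n ∧ ∃ k : ℕ, |(n : ℝ) ^ γ - (t + k * (2 * Real.pi))| < δ := by
  set f : ℕ → ℝ := fun n => (n : ℝ) ^ γ with hf
  have hmono : ∀ {m n : ℕ}, m ≤ n → f m ≤ f n := by
    intro m n hmn
    exact Real.rpow_le_rpow (Nat.cast_nonneg m) (by exact_mod_cast hmn) hγ0.le
  -- steps tend to 0
  have hsteps : Tendsto (fun n : ℕ => f (n + 1) - f n) atTop (nhds 0) := by
    have h1 : Tendsto (fun n : ℕ => γ * (n : ℝ) ^ (γ - 1)) atTop (nhds 0) := by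
      have : Tendsto (fun x : ℝ => x ^ (-(1 - γ))) atTop (nhds 0) :=
        tendsto_rpow_neg_atTop (by linarith)
      have h2 := this.comp tendsto_natCast_atTop_atTop (α := ℕ)
      have h3 : Tendsto (fun n : ℕ => (n : ℝ) ^ (γ - 1)) atTop (nhds 0) := by
        simpa [Function.comp_def, neg_sub] using h2
      simpa using h3.const_mul γ
    refine squeeze_zero' ?_ ?_ h1
    · filter_upwards [eventually_ge_atTop 1] with n hn
      have := hmono (Nat.le_succ n)
      push_cast [Nat.succ_eq_add_one] at this ⊢
      linarith
    · filter_upwards [eventually_ge_atTop 1] with n hn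
      have := rpow_step_bound γ hγ0 hγ1.le n hn
      simp only [hf]
      push_cast
      linarith
  have htends : Tendsto f atTop atTop :=
    (tendsto_rpow_atTop hγ0).comp tendsto_natCast_atTop_atTop
  -- get M ≥ N with small steps beyond M
  have hev : ∀ᶠ n in atTop, f (n + 1) - f n < δ := by
    have := hsteps (Metric.ball_mem_nhds (0:ℝ) hδ)
    filter_upwards [this] with n hn
    have : |f (n+1) - f n - 0| < δ := by simpa [Real.dist_eq] using hn
    rw [sub_zero] at this
    exact lt_of_le_of_lt (le_abs_self _) this
  obtain ⟨M₀, hM₀⟩ := eventually_atTop.mp hev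
  set M := max M₀ N with hM
  -- choose k with f M < t + k * 2π
  have hπ : (0:ℝ) < 2 * Real.pi := by positivity
  obtain ⟨k, hk⟩ := exists_nat_gt ((f M - t) / (2 * Real.pi))
  have hkgt : f M < t + k * (2 * Real.pi) := by
    have := (div_lt_iff₀ hπ).mp hk
    linarith
  -- least n with t + k 2π ≤ f n
  have hex : ∃ n, t + k * (2 * Real.pi) ≤ f n := by
    obtain ⟨n, hn⟩ := (tendsto_atTop.mp htends (t + k * (2 * Real.pi))).exists
    exact ⟨n, hn⟩
  classical
  obtain ⟨n, hfn, hmin⟩ : ∃ n, (t + k * (2 * Real.pi) ≤ f n) ∧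
      ∀ m, m < n → ¬ (t + k * (2 * Real.pi) ≤ f m) :=
    ⟨Nat.find hex, Nat.find_spec hex, fun m hm => Nat.find_min hex hm⟩
  have hnM : M < n := by
    by_contra h
    push_neg at h
    exact absurd (le_trans hfn (hmono h)) (not_le.mpr hkgt)
  obtain ⟨m, rfl⟩ : ∃ m, n = m + 1 := ⟨n - 1, by omega⟩
  have hmlt : f m < t + k * (2 * Real.pi) := by
    have := hmin m (by omega)
    linarith [not_le.mp this]
  have hmM₀ : M₀ ≤ m := by omega
  have hstep := hM₀ m hmM₀
  refine ⟨m + 1, by omega, k, ?_⟩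
  rw [abs_of_nonneg (by simpa [hf] using sub_nonneg.mpr hfn)]
  have : f (m + 1) - (t + k * (2 * Real.pi)) < f (m + 1) - f m := by linarith
  calc (((m:ℕ) + 1 : ℕ) : ℝ) ^ γ - (t + k * (2 * Real.pi))
      = f (m + 1) - (t + k * (2 * Real.pi)) := by simp [hf]
    _ < δ := by linarith

/-- For `b_n = λ cos(n^γ)` with `γ ∈ (0,1/2)`: square-summable variation,
`limsup b_n = λ` and `liminf b_n = -λ`. -/
theorem slowly_oscillating_example (lam γ : ℝ) (hlam : 0 < lam)
    (hγ : γ ∈ Set.Ioo (0 : ℝ) (1 / 2)) (b : ℕ → ℝ)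
    (hb : ∀ n : ℕ, b n = lam * Real.cos ((n : ℝ) ^ γ)) :
    Summable (fun n => |b (n + 1) - b n| ^ 2) ∧
    limsup b atTop = lam ∧
    liminf b atTop = -lam := by
  obtain ⟨hγ0, hγhalf⟩ := hγ
  have hγ1 : γ < 1 := by linarith
  -- pointwise bounds
  have hble : ∀ n, b n ≤ lam := fun n => by
    rw [hb n]
    calc lam * Real.cos ((n:ℝ)^γ) ≤ lam * 1 :=
          mul_le_mul_of_nonneg_left (Real.cos_le_one _) hlam.le
      _ = lam := mul_one lam
  have hbge : ∀ n, -lam ≤ b n := fun n => by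
    rw [hb n]
    calc -lam = lam * (-1) := by ring
      _ ≤ lam * Real.cos ((n:ℝ)^γ) :=
          mul_le_mul_of_nonneg_left (Real.neg_one_le_cos _) hlam.le
  -- Part 1: summability
  have hsum : Summable (fun n => |b (n + 1) - b n| ^ 2) := by
    rw [← summable_nat_add_iff 1]
    have hcomp : Summable (fun n : ℕ => (lam * γ)^2 * ((n:ℝ) + 1) ^ ((γ - 1) * 2)) := by
      apply Summable.mul_left
      have : Summable (fun n : ℕ => ((n:ℝ)) ^ ((γ - 1) * 2)) :=
        Real.summable_nat_rpow.mpr (by nlinarith)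
      exact (summable_nat_add_iff 1).mpr this |>.congr (fun n => by push_cast; ring_nf)
    refine Summable.of_nonneg_of_le (fun n => by positivity) (fun n => ?_) hcomp
    -- |b (n+2) - b (n+1)| ≤ lam * γ * (n+1)^(γ-1)
    have hn1 : 1 ≤ n + 1 := Nat.le_add_left 1 n
    have step : ((n:ℝ) + 1 + 1) ^ γ - ((n:ℝ) + 1) ^ γ ≤ γ * ((n:ℝ) + 1) ^ (γ - 1) := by
      have := rpow_step_bound γ hγ0 hγ1.le (n + 1) hn1
      push_cast at this
      linarith
    have hstepnn : (0:ℝ) ≤ ((n:ℝ) + 1 + 1) ^ γ - ((n:ℝ) + 1) ^ γ := by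
      have := Real.rpow_le_rpow (x := (n:ℝ)+1) (y := (n:ℝ)+1+1)
        (by positivity) (by linarith) hγ0.le
      linarith
    have hcos : |Real.cos (((n:ℝ)+1+1)^γ) - Real.cos (((n:ℝ)+1)^γ)|
        ≤ |(((n:ℝ)+1+1)^γ) - (((n:ℝ)+1)^γ)| := by
      rw [Real.cos_sub_cos]
      rw [abs_mul, abs_mul]
      have h1 : |(-2:ℝ)| = 2 := by norm_num
      rw [h1]
      have h2 : |Real.sin (((((n:ℝ)+1+1)^γ) + (((n:ℝ)+1)^γ)) / 2)| ≤ 1 := Real.abs_sin_le_one _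
      have h3 : |Real.sin (((((n:ℝ)+1+1)^γ) - (((n:ℝ)+1)^γ)) / 2)|
          ≤ |((((n:ℝ)+1+1)^γ) - (((n:ℝ)+1)^γ)) / 2| := Real.abs_sin_le_abs
      calc 2 * |Real.sin (((((n:ℝ)+1+1)^γ) + (((n:ℝ)+1)^γ)) / 2)|
            * |Real.sin (((((n:ℝ)+1+1)^γ) - (((n:ℝ)+1)^γ)) / 2)|
          ≤ 2 * 1 * |((((n:ℝ)+1+1)^γ) - (((n:ℝ)+1)^γ)) / 2| := by
            apply mul_le_mul _ h3 (abs_nonneg _) (by positivity)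
            exact mul_le_mul_of_nonneg_left h2 (by norm_num)
        _ = |(((n:ℝ)+1+1)^γ) - (((n:ℝ)+1)^γ)| := by
            rw [abs_div]
            norm_num
            ring
    have hdiff : |b (n + 1 + 1) - b (n + 1)| ≤ lam * (γ * ((n:ℝ)+1) ^ (γ - 1)) := by
      rw [hb (n+1+1), hb (n+1)]
      push_cast
      rw [← mul_sub, abs_mul, abs_of_pos hlam]
      refine mul_le_mul_of_nonneg_left ?_ hlam.le
      refine hcos.trans ?_
      rw [abs_of_nonneg hstepnn]
      exact step
    have hnn : (0:ℝ) ≤ |b (n + 1 + 1) - b (n + 1)| := abs_nonneg _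
    calc |b (n + 1 + 1) - b (n + 1)| ^ 2
        ≤ (lam * (γ * ((n:ℝ)+1) ^ (γ - 1))) ^ 2 := by
          apply pow_le_pow_left₀ hnn hdiff
      _ = (lam * γ)^2 * (((n:ℝ)+1) ^ (γ - 1))^2 := by ring
      _ = (lam * γ)^2 * ((n:ℝ) + 1) ^ ((γ - 1) * 2) := by
          rw [← Real.rpow_natCast (((n:ℝ)+1) ^ (γ - 1)) 2, ← Real.rpow_mul (by positivity)]
          norm_num
  -- boundedness facts
  have hbd_le : IsBoundedUnder (· ≤ ·) atTop b := isBoundedUnder_of ⟨lam, hble⟩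
  have hbd_ge : IsBoundedUnder (· ≥ ·) atTop b := isBoundedUnder_of ⟨-lam, fun n => hbge n⟩
  -- frequently close to target values
  have hfreq : ∀ (t : ℝ), 0 ≤ t → ∀ ε > (0:ℝ),
      ∃ᶠ n in atTop, |b n - lam * Real.cos t| < ε := by
    intro t ht ε hε
    have hcont : ContinuousAt Real.cos t := Real.continuous_cos.continuousAt
    obtain ⟨δ, hδ, hδ'⟩ := Metric.continuousAt_iff.mp hcont (ε / lam) (by positivity)
    rw [frequently_atTop]
    intro N
    obtain ⟨n, hnN, k, hk⟩ := comes_close γ hγ0 hγ1 t ht δ hδ N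
    refine ⟨n, hnN, ?_⟩
    have hper : Real.cos ((n:ℝ)^γ) = Real.cos ((n:ℝ)^γ - k * (2 * Real.pi)) := by
      have := Real.cos_add_int_mul_two_pi ((n:ℝ)^γ - k * (2 * Real.pi)) k
      push_cast at this
      rw [← this]; ring_nf
    have hdist : dist ((n:ℝ)^γ - k * (2 * Real.pi)) t < δ := by
      rw [Real.dist_eq]
      have : (n:ℝ)^γ - k * (2 * Real.pi) - t = (n:ℝ)^γ - (t + k * (2 * Real.pi)) := by ring
      rw [this]; exact hk
    have := hδ' hdist
    rw [Real.dist_eq] at this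
    rw [hb n, hper]
    calc |lam * Real.cos ((n:ℝ)^γ - k * (2 * Real.pi)) - lam * Real.cos t|
        = lam * |Real.cos ((n:ℝ)^γ - k * (2 * Real.pi)) - Real.cos t| := by
          rw [← mul_sub, abs_mul, abs_of_pos hlam]
      _ < lam * (ε / lam) := by exact mul_lt_mul_of_pos_left this hlam
      _ = ε := by field_simp
  refine ⟨hsum, ?_, ?_⟩
  -- limsup = lam
  · apply le_antisymm
    · exact limsup_le_of_le (isCoboundedUnder_le_of_le atTop hbge) (Eventually.of_forall hble)
    · refine le_of_forall_sub_le fun ε hε => ?_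
      refine le_limsup_of_frequently_le ?_ hbd_le
      have := hfreq 0 le_rfl ε hε
      rw [Real.cos_zero, mul_one] at this
      exact this.mono fun n hn => by
        have := abs_lt.mp hn
        linarith [this.1]
  -- liminf = -lam
  · apply le_antisymm
    · have key : ∀ ε > (0:ℝ), liminf b atTop ≤ -lam + ε := by
        intro ε hε
        refine liminf_le_of_frequently_le ?_ hbd_ge
        have := hfreq Real.pi Real.pi_pos.le ε hε
        rw [Real.cos_pi, mul_neg_one] at this
        exact this.mono fun n hn => by
          have := abs_lt.mp hn
          linarith [this.2]
      by_contra h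
      push_neg at h
      have := key ((liminf b atTop - (-lam)) / 2) (by linarith)
      linarith
    · exact le_liminf_of_le (isCoboundedUnder_ge_of_le atTop hble) (Eventually.of_forall hbge)
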